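/- For all n ≥ 1, Σ_{π ∈ B_n} x^{inv^A(π) + nsp(π)} = 2 [n]_x · Π_{i=1}^{n-1} [2i]_x, i.e., the generating function equals 2[n]_x [2(n-1)]_x!! where [2m]_x!! = Π_{i=1}^m [2i]_x. -/
import Mathlib


open Finset

/-- The value function of the signed permutation determined by `σ` and sign vector `ε`:
`bval n σ ε i` is `π(i)` for `i ∈ {-n,…,n}`, with `π(0) = 0` and `π(-i) = -π(i)`. -/
def bval (n : ℕ) (σ : Equiv.Perm (Fin n)) (ε : Fin n → Bool) : ℤ → ℤ := fun i =>
  if h : 1 ≤ i.natAbs ∧ i.natAbs ≤ n then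
    (Int.sign i) *
      (if ε ⟨i.natAbs - 1, by omega⟩ then -((((σ ⟨i.natAbs - 1, by omega⟩ : Fin n) : ℕ) : ℤ) + 1)
       else (((σ ⟨i.natAbs - 1, by omega⟩ : Fin n) : ℕ) : ℤ) + 1)
  else 0

/-- width-`k` type-B descent number: `#{0 ≤ i ≤ n-k : π(i) > π(i+k)}`, `π(0)=0`. -/
def desB (n k : ℕ) (π : ℤ → ℤ) : ℕ :=
  ((range (n - k + 1)).filter fun i : ℕ => π i > π ((i : ℤ) + k)).card

/-- width-`k` type-A descent number: `#{1 ≤ i ≤ n-k : π(i) > π(i+k)}`. -/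
def desA (n k : ℕ) (π : ℤ → ℤ) : ℕ :=
  ((Icc 1 (n - k)).filter fun i : ℕ => π i > π ((i : ℤ) + k)).card

/-- width-`k` negative descent number: `#{1 ≤ i ≤ n-k : π(-i) > π(i+k)}`. -/
def ndesB (n k : ℕ) (π : ℤ → ℤ) : ℕ :=
  ((Icc 1 (n - k)).filter fun i : ℕ => π (-(i : ℤ)) > π ((i : ℤ) + k)).card

/-- width-`k` inversion number: pairs `i < j` in `[n]` with `j - i` a positive multiple of `k`
and `π(i) > π(j)`. -/
def invAk (n k : ℕ) (π : ℤ → ℤ) : ℕ :=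
  (((Icc 1 n) ×ˢ (Icc 1 n)).filter fun p : ℕ × ℕ =>
    p.1 < p.2 ∧ k ∣ (p.2 - p.1) ∧ π p.1 > π p.2).card

/-- width-`k` negative-entry statistic: `#{1 ≤ i ≤ ⌊n/k⌋ : π(ik) < 0}`. -/
def negk (n k : ℕ) (π : ℤ → ℤ) : ℕ :=
  ((Icc 1 (n / k)).filter fun i : ℕ => π ((i : ℤ) * k) < 0).card

/-- width-`k` negative-sum-pair statistic. -/
def nspk (n k : ℕ) (π : ℤ → ℤ) : ℕ :=
  (((Icc 1 n) ×ˢ (Icc 1 n)).filter fun p : ℕ × ℕ =>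
    p.1 < p.2 ∧ k ∣ (p.2 - p.1) ∧ π p.1 + π p.2 < 0).card

/-- width-`k` type-B inversion number. -/
def invBk (n k : ℕ) (π : ℤ → ℤ) : ℕ := invAk n k π + negk n k π + nspk n k π


namespace S3

def Lc {n : ℕ} (σ : Equiv.Perm (Fin n)) (j : Fin n) : ℕ :=
  (Finset.univ.filter fun i : Fin n => i < j ∧ σ j < σ i).card

def Sc {n : ℕ} (σ : Equiv.Perm (Fin n)) (j : Fin n) : ℕ :=
  (Finset.univ.filter fun i : Fin n => i < j ∧ σ i < σ j).card

lemma sum_ind_lt (n m : ℕ) (h : m ≤ n) :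
    ∑ i ∈ range n, (if i < m then (1:ℕ) else 0) = m := by
  rw [← Finset.card_filter]
  have : (range n).filter (fun i => i < m) = range m := by
    ext a; simp only [mem_filter, mem_range]; omega
  rw [this, card_range]

lemma sum_ind_le (n m : ℕ) :
    ∑ i ∈ range n, (if m ≤ i then (1:ℕ) else 0) = n - m := by
  rw [← Finset.card_filter]
  have : (range n).filter (fun i => m ≤ i) = Ico m n := by
    ext a; simp only [mem_filter, mem_range, mem_Ico]; omega
  rw [this, Nat.card_Ico]

lemma Lc_add_Sc {n : ℕ} (σ : Equiv.Perm (Fin n)) (j : Fin n) :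
    Lc σ j + Sc σ j = (j : ℕ) := by
  rw [Lc, Sc, Finset.card_filter, Finset.card_filter, ← Finset.sum_add_distrib]
  have : ∀ i : Fin n,
      ((if i < j ∧ σ j < σ i then (1:ℕ) else 0) + (if i < j ∧ σ i < σ j then 1 else 0))
        = if (i:ℕ) < (j:ℕ) then 1 else 0 := by
    intro i
    by_cases hij : i < j
    · have hne : σ i ≠ σ j := fun h => (ne_of_lt hij) (σ.injective h)
      rcases hne.lt_or_gt with h1 | h1 <;> simp [hij, h1, Fin.lt_def, h1.not_gt, hij.le]
    · simp [hij, fun (h : (i:ℕ) < (j:ℕ)) => hij (Fin.lt_def.mpr h)]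
  rw [Finset.sum_congr rfl fun i _ => this i]
  rw [Fin.sum_univ_eq_sum_range (fun m => if m < (j:ℕ) then (1:ℕ) else 0) n]
  exact sum_ind_lt n j (le_of_lt j.isLt)

lemma bval_pos (n : ℕ) (σ : Equiv.Perm (Fin n)) (ε : Fin n → Bool) (i : ℕ) (hi : i < n) :
    bval n σ ε ((1 + i : ℕ) : ℤ) =
      if ε ⟨i, hi⟩ then -(((σ ⟨i, hi⟩ : ℕ) : ℤ) + 1) else ((σ ⟨i, hi⟩ : ℕ) : ℤ) + 1 := by
  have hna : ((1 + i : ℕ) : ℤ).natAbs = 1 + i := Int.natAbs_natCast _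
  have hsign : ((1 + i : ℕ) : ℤ).sign = 1 := Int.sign_eq_one_of_pos (by positivity)
  unfold bval
  rw [dif_pos (by rw [hna]; omega)]
  simp only [hna, hsign, one_mul, show 1 + i - 1 = i from by omega]

def K (n : ℕ) (σ : Equiv.Perm (Fin n)) (ε : Fin n → Bool) (i j : ℕ) : ℕ :=
  if h : i < n ∧ j < n then
    (if i < j then
      (if ε ⟨j, h.2⟩ then (if σ ⟨j, h.2⟩ < σ ⟨i, h.1⟩ then 1 else 2)
       else (if σ ⟨j, h.2⟩ < σ ⟨i, h.1⟩ then 1 else 0))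
     else 0)
  else 0

lemma pointwise (n : ℕ) (σ : Equiv.Perm (Fin n)) (ε : Fin n → Bool) (i j : ℕ)
    (hi : i < n) (hj : j < n) :
    ((if 1 + i < 1 + j ∧ 1 ∣ (1 + j - (1 + i)) ∧
        bval n σ ε ((1 + i : ℕ) : ℤ) > bval n σ ε ((1 + j : ℕ) : ℤ) then (1:ℕ) else 0)
     + (if 1 + i < 1 + j ∧ 1 ∣ (1 + j - (1 + i)) ∧
        bval n σ ε ((1 + i : ℕ) : ℤ) + bval n σ ε ((1 + j : ℕ) : ℤ) < 0 then (1:ℕ) else 0))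
      = K n σ ε i j := by
  rw [bval_pos n σ ε i hi, bval_pos n σ ε j hj]
  unfold K
  rw [dif_pos ⟨hi, hj⟩]
  simp only [one_dvd, true_and, Fin.lt_def]
  by_cases hij : i < j
  · have hne : ((σ ⟨i, hi⟩ : Fin n) : ℕ) ≠ ((σ ⟨j, hj⟩ : Fin n) : ℕ) := by
      intro h
      exact absurd (σ.injective (Fin.ext h)) (by simp [Fin.ext_iff]; omega)
    have h1i : 1 + i < 1 + j := by omega
    cases hεi : ε ⟨i, hi⟩ <;> cases hεj : ε ⟨j, hj⟩ <;>
      simp only [if_true, if_false, Bool.false_eq_true, hij] <;>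
      first
        | omega
        | (split_ifs <;> omega)
  · simp only [show ¬ (1 + i < 1 + j) from by omega, hij, if_neg, false_and, if_false]

lemma hK (n : ℕ) (σ : Equiv.Perm (Fin n)) (ε : Fin n → Bool) (i j : Fin n) :
    K n σ ε (i : ℕ) (j : ℕ) =
      if i < j then
        (if ε j then (if σ j < σ i then 1 else 2) else (if σ j < σ i then 1 else 0))
      else 0 := by
  unfold K
  rw [dif_pos ⟨i.isLt, j.isLt⟩]
  simp only [Fin.eta, Fin.lt_def]

lemma rowSum (n : ℕ) (σ : Equiv.Perm (Fin n)) (ε : Fin n → Bool) (j : Fin n) :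
    (Lc σ j + if ε j then 2 * Sc σ j else 0) = ∑ i ∈ range n, K n σ ε i (j : ℕ) := by
  rw [← Fin.sum_univ_eq_sum_range (fun iv => K n σ ε iv (j : ℕ)) n]
  rw [Finset.sum_congr rfl fun i _ => hK n σ ε i j]
  by_cases hε : ε j
  · simp only [hε, if_true]
    have step : ∀ i : Fin n, (if i < j then (if σ j < σ i then (1:ℕ) else 2) else 0)
        = (if i < j ∧ σ j < σ i then 1 else 0) + 2 * (if i < j ∧ σ i < σ j then 1 else 0) := by
      intro i
      by_cases h1 : i < j
      · have hne : σ i ≠ σ j := fun h => (ne_of_lt h1) (σ.injective h)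
        rcases hne.lt_or_gt with h2 | h2 <;> simp [h1, h2, h2.not_gt]
      · simp [h1]
    rw [Finset.sum_congr rfl fun i _ => step i, Finset.sum_add_distrib, ← Finset.mul_sum,
      ← Finset.card_filter, ← Finset.card_filter]
    rfl
  · simp only [hε, if_false, Bool.false_eq_true, add_zero]
    have step : ∀ i : Fin n, (if i < j then (if σ j < σ i then (1:ℕ) else 0) else 0)
        = (if i < j ∧ σ j < σ i then 1 else 0) := by
      intro i; by_cases h1 : i < j <;> simp [h1]
    rw [Finset.sum_congr rfl fun i _ => step i, ← Finset.card_filter]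
    rfl

lemma statB (n : ℕ) (σ : Equiv.Perm (Fin n)) (ε : Fin n → Bool) :
    invAk n 1 (bval n σ ε) + nspk n 1 (bval n σ ε)
      = ∑ j : Fin n, (Lc σ j + if ε j then 2 * Sc σ j else 0) := by
  unfold invAk nspk
  rw [Finset.card_filter, Finset.card_filter, ← Finset.sum_add_distrib, Finset.sum_product]
  rw [← Finset.Ico_add_one_right_eq_Icc]
  simp only [Finset.sum_Ico_eq_sum_range, Nat.add_sub_cancel]
  rw [Finset.sum_comm]
  rw [Finset.sum_congr rfl (fun j (_ : j ∈ Finset.univ) => rowSum n σ ε j)]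
  rw [Fin.sum_univ_eq_sum_range (fun jv => ∑ i ∈ range n, K n σ ε i jv) n]
  refine Finset.sum_congr rfl fun j hj => Finset.sum_congr rfl fun i hi => ?_
  exact pointwise n σ ε i j (mem_range.mp hi) (mem_range.mp hj)

lemma sumEps {R : Type*} [CommRing R] (n : ℕ) (x : R) (L S : Fin n → ℕ) :
    ∑ ε : Fin n → Bool, x ^ (∑ j : Fin n, (L j + if ε j then 2 * S j else 0))
      = ∏ j : Fin n, (x ^ (L j) + x ^ (L j + 2 * S j)) := by
  symm
  calc ∏ j : Fin n, (x ^ (L j) + x ^ (L j + 2 * S j))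
      = ∏ j : Fin n, ∑ b ∈ (Finset.univ : Finset Bool),
          x ^ (L j + if b then 2 * S j else 0) := by
        refine Finset.prod_congr rfl fun j _ => ?_
        rw [Fintype.sum_bool]
        simp only [if_true, if_false, Bool.false_eq_true, add_zero]
        ring
    _ = ∑ ε ∈ Fintype.piFinset (fun _ : Fin n => (Finset.univ : Finset Bool)),
          ∏ j : Fin n, x ^ (L j + if ε j then 2 * S j else 0) :=
        Finset.prod_univ_sum _ _
    _ = ∑ ε : Fin n → Bool, x ^ (∑ j : Fin n, (L j + if ε j then 2 * S j else 0)) := by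
        rw [Fintype.piFinset_univ]
        exact Finset.sum_congr rfl fun ε _ => Finset.prod_pow_eq_pow_sum _ _ _

def emap {n : ℕ} (p : Fin (n+1)) (τ : Equiv.Perm (Fin n)) : Equiv.Perm (Fin (n+1)) :=
  (finSuccEquiv' (Fin.last n)).trans ((τ.optionCongr).trans (finSuccEquiv' p).symm)

lemma emap_last {n : ℕ} (p : Fin (n+1)) (τ : Equiv.Perm (Fin n)) :
    emap p τ (Fin.last n) = p := by
  simp [emap, finSuccEquiv'_at, finSuccEquiv'_symm_none]

lemma emap_castSucc {n : ℕ} (p : Fin (n+1)) (τ : Equiv.Perm (Fin n)) (i : Fin n) :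
    emap p τ (Fin.castSucc i) = p.succAbove (τ i) := by
  have h1 : finSuccEquiv' (Fin.last n) (Fin.castSucc i) = some i := by
    rw [← Fin.succAbove_last_apply i]; exact finSuccEquiv'_succAbove _ _
  simp [emap, h1, finSuccEquiv'_symm_some]

lemma emap_inj {n : ℕ} :
    Function.Injective (fun q : Fin (n+1) × Equiv.Perm (Fin n) => emap q.1 q.2) := by
  rintro ⟨p, τ⟩ ⟨p', τ'⟩ h
  simp only at h
  have hp : p = p' := by
    rw [← emap_last p τ, ← emap_last p' τ', h]
  subst hp
  have hτ : τ = τ' := by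
    apply Equiv.ext
    intro i
    have := congrArg (fun (e : Equiv.Perm (Fin (n+1))) => e (Fin.castSucc i)) h
    simp only [emap_castSucc] at this
    exact Fin.succAbove_right_injective this
  simp [hτ]

lemma emap_bij {n : ℕ} :
    Function.Bijective (fun q : Fin (n+1) × Equiv.Perm (Fin n) => emap q.1 q.2) := by
  rw [Fintype.bijective_iff_injective_and_card]
  refine ⟨emap_inj, ?_⟩
  simp [Fintype.card_perm, Nat.factorial_succ]

lemma lt_succAbove_self {n : ℕ} (p : Fin (n+1)) (v : Fin n) :
    p < p.succAbove v ↔ (p : ℕ) ≤ (v : ℕ) := by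
  by_cases h : Fin.castSucc v < p
  · rw [Fin.succAbove_of_castSucc_lt _ _ h]
    have hv := Fin.lt_def.mp h
    simp only [Fin.lt_def, Fin.coe_castSucc] at *
    omega
  · rw [Fin.succAbove_of_le_castSucc _ _ (le_of_not_gt h)]
    have hv := Fin.lt_def.not.mp h
    simp only [Fin.lt_def, Fin.coe_castSucc, Fin.val_succ] at *
    omega

lemma Lc_emap_cast {n : ℕ} (p : Fin (n+1)) (τ : Equiv.Perm (Fin n)) (j' : Fin n) :
    Lc (emap p τ) (Fin.castSucc j') = Lc τ j' := by
  unfold Lc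
  rw [Finset.card_filter, Finset.card_filter, Fin.sum_univ_castSucc]
  have hlast : (if Fin.last n < Fin.castSucc j' ∧
      (emap p τ) (Fin.castSucc j') < (emap p τ) (Fin.last n) then (1:ℕ) else 0) = 0 := by
    rw [if_neg]
    rintro ⟨hc, -⟩
    have := Fin.lt_def.mp hc
    simp only [Fin.val_last, Fin.coe_castSucc] at this
    omega
  rw [hlast, add_zero]
  refine Finset.sum_congr rfl fun i _ => ?_
  rw [emap_castSucc, emap_castSucc]
  simp only [Fin.castSucc_lt_castSucc_iff, Fin.succAbove_lt_succAbove_iff]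

lemma Lc_emap_last {n : ℕ} (p : Fin (n+1)) (τ : Equiv.Perm (Fin n)) :
    Lc (emap p τ) (Fin.last n) = n - (p : ℕ) := by
  unfold Lc
  rw [Finset.card_filter, Fin.sum_univ_castSucc]
  have hlast : (if Fin.last n < Fin.last n ∧
      (emap p τ) (Fin.last n) < (emap p τ) (Fin.last n) then (1:ℕ) else 0) = 0 := by
    rw [if_neg]; rintro ⟨hc, -⟩; exact absurd hc (lt_irrefl _)
  rw [hlast, add_zero]
  have hterm : ∀ i : Fin n, (if Fin.castSucc i < Fin.last n ∧
      (emap p τ) (Fin.last n) < (emap p τ) (Fin.castSucc i) then (1:ℕ) else 0)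
        = (fun v : Fin n => if (p : ℕ) ≤ (v : ℕ) then (1:ℕ) else 0) (τ i) := by
    intro i
    rw [emap_castSucc, emap_last]
    simp only [Fin.castSucc_lt_last, true_and, lt_succAbove_self]
  rw [Finset.sum_congr rfl fun i _ => hterm i]
  rw [Equiv.sum_comp τ (fun v : Fin n => if (p : ℕ) ≤ (v : ℕ) then (1:ℕ) else 0)]
  rw [Fin.sum_univ_eq_sum_range (fun m => if (p : ℕ) ≤ m then (1:ℕ) else 0) n]
  exact sum_ind_le n p

lemma lehmer {R : Type*} [CommRing R] : ∀ (n : ℕ) (h : ℕ → ℕ → R),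
    ∑ σ : Equiv.Perm (Fin n), ∏ j : Fin n, h (j : ℕ) (Lc σ j)
      = ∏ j : Fin n, ∑ l ∈ range ((j : ℕ) + 1), h (j : ℕ) l := by
  intro n
  induction n with
  | zero => intro h; simp
  | succ n ih =>
    intro h
    rw [← Function.Bijective.sum_comp emap_bij
      (fun σ => ∏ j : Fin (n+1), h (j : ℕ) (Lc σ j))]
    rw [Fintype.sum_prod_type]
    have hterm : ∀ (p : Fin (n+1)) (τ : Equiv.Perm (Fin n)),
        ∏ j : Fin (n+1), h (j : ℕ) (Lc (emap p τ) j)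
          = (∏ j : Fin n, h (j : ℕ) (Lc τ j)) * h n (n - (p : ℕ)) := by
      intro p τ
      rw [Fin.prod_univ_castSucc]
      congr 1
      · exact Finset.prod_congr rfl fun j _ => by rw [Lc_emap_cast, Fin.coe_castSucc]
      · rw [Lc_emap_last, Fin.val_last]
    calc ∑ p : Fin (n+1), ∑ τ : Equiv.Perm (Fin n),
            (fun q : Fin (n+1) × Equiv.Perm (Fin n) =>
              ∏ j : Fin (n+1), h (j : ℕ) (Lc (emap q.1 q.2) j)) (p, τ)
        = ∑ p : Fin (n+1), (∑ τ : Equiv.Perm (Fin n), ∏ j : Fin n, h (j : ℕ) (Lc τ j))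
            * h n (n - (p : ℕ)) := by
          refine Finset.sum_congr rfl fun p _ => ?_
          rw [show (∑ τ : Equiv.Perm (Fin n),
              (fun q : Fin (n+1) × Equiv.Perm (Fin n) =>
                ∏ j : Fin (n+1), h (j : ℕ) (Lc (emap q.1 q.2) j)) (p, τ))
              = ∑ τ : Equiv.Perm (Fin n), (∏ j : Fin n, h (j : ℕ) (Lc τ j)) * h n (n - (p : ℕ))
            from Finset.sum_congr rfl fun τ _ => hterm p τ]
          rw [← Finset.sum_mul]
      _ = (∑ τ : Equiv.Perm (Fin n), ∏ j : Fin n, h (j : ℕ) (Lc τ j))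
            * ∑ p : Fin (n+1), h n (n - (p : ℕ)) := by rw [← Finset.mul_sum]
      _ = (∏ j : Fin n, ∑ l ∈ range ((j : ℕ) + 1), h (j : ℕ) l)
            * ∑ l ∈ range (n + 1), h n l := by
          rw [ih h]
          congr 1
          rw [Fin.sum_univ_eq_sum_range (fun m => h n (n - m)) (n+1)]
          have h2 := Finset.sum_range_reflect (fun l => h n l) (n+1)
          simp only [Nat.add_sub_cancel] at h2
          exact h2
      _ = ∏ j : Fin (n+1), ∑ l ∈ range ((j : ℕ) + 1), h (j : ℕ) l := by
          rw [Fin.prod_univ_castSucc]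
          simp only [Fin.coe_castSucc, Fin.val_last]

lemma alg {R : Type*} [CommRing R] (x : R) : ∀ n : ℕ, 1 ≤ n →
    ∏ j ∈ range n, ((∑ l ∈ range (j+1), x^l) * (1 + x^j))
      = 2 * (∑ i ∈ range n, x^i) * ∏ i ∈ Icc 1 (n-1), ∑ j ∈ range (2*i), x^j := by
  intro n
  induction n with
  | zero => intro h; omega
  | succ n ih =>
    intro _
    rcases Nat.eq_zero_or_pos n with rfl | hn
    · norm_num
    · rw [Finset.prod_range_succ, ih hn]
      have h1 : n + 1 - 1 = n := rfl
      rw [h1]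
      have h2 : ∏ i ∈ Icc 1 n, (∑ j ∈ range (2*i), x^j)
          = (∏ i ∈ Icc 1 (n-1), ∑ j ∈ range (2*i), x^j) * ∑ j ∈ range (2*n), x^j := by
        have h := Finset.prod_Icc_succ_top (show 1 ≤ (n-1)+1 from by omega)
          (fun i => ∑ j ∈ range (2*i), x^j)
        rw [show n-1+1 = n from by omega] at h
        exact h
      rw [h2]
      have h3 : (∑ j ∈ range (2*n), x^j) = (∑ j ∈ range n, x^j) * (1 + x^n) := by
        rw [show 2*n = n + n from by ring, Finset.sum_range_add]
        have : ∀ i ∈ range n, x^(n+i) = x^n * x^i := fun i _ => pow_add x n i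
        rw [Finset.sum_congr rfl this, ← Finset.mul_sum]
        ring
      rw [h3]
      ring

lemma factor {R : Type*} [CommRing R] (x : R) (m : ℕ) :
    ∑ l ∈ range (m+1), (x^l + x^(l + 2*(m - l)))
      = (∑ l ∈ range (m+1), x^l) * (1 + x^m) := by
  rw [Finset.sum_add_distrib]
  have h1 : ∀ l ∈ range (m+1), x^(l + 2*(m-l)) = x^m * x^(m-l) := by
    intro l hl
    have hl' : l ≤ m := by have := mem_range.mp hl; omega
    rw [show l + 2*(m-l) = m + (m-l) from by omega, pow_add]
  rw [Finset.sum_congr rfl h1, ← Finset.mul_sum]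
  have h2 : ∑ l ∈ range (m+1), x^(m-l) = ∑ l ∈ range (m+1), x^l := by
    have h := Finset.sum_range_reflect (fun l => x^l) (m+1)
    simp only [Nat.add_sub_cancel] at h
    exact h
  rw [h2]
  ring

end S3

/-- `Σ_{π ∈ B_n} x^{inv^A(π)+nsp(π)} = 2 [n]_x [2(n-1)]_x!!`. -/
theorem stmt3 (n : ℕ) (hn : 1 ≤ n) (R : Type*) [CommRing R] (x : R) :
    ∑ σ : Equiv.Perm (Fin n), ∑ ε : Fin n → Bool,
        x ^ (invAk n 1 (bval n σ ε) + nspk n 1 (bval n σ ε)) =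
      2 * (∑ i ∈ Finset.range n, x ^ i) *
        ∏ i ∈ Finset.Icc 1 (n - 1), ∑ j ∈ Finset.range (2 * i), x ^ j := by
  calc ∑ σ : Equiv.Perm (Fin n), ∑ ε : Fin n → Bool,
        x ^ (invAk n 1 (bval n σ ε) + nspk n 1 (bval n σ ε))
      = ∑ σ : Equiv.Perm (Fin n), ∑ ε : Fin n → Bool,
          x ^ (∑ j : Fin n, (S3.Lc σ j + if ε j then 2 * S3.Sc σ j else 0)) := by
        refine Finset.sum_congr rfl fun σ _ => Finset.sum_congr rfl fun ε _ => ?_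
        rw [S3.statB]
    _ = ∑ σ : Equiv.Perm (Fin n), ∏ j : Fin n,
          (x ^ (S3.Lc σ j) + x ^ (S3.Lc σ j + 2 * S3.Sc σ j)) :=
        Finset.sum_congr rfl fun σ _ => S3.sumEps n x (S3.Lc σ) (S3.Sc σ)
    _ = ∑ σ : Equiv.Perm (Fin n), ∏ j : Fin n,
          (fun (a l : ℕ) => x ^ l + x ^ (l + 2 * (a - l))) (j : ℕ) (S3.Lc σ j) := by
        refine Finset.sum_congr rfl fun σ _ => Finset.prod_congr rfl fun j _ => ?_
        have h := S3.Lc_add_Sc σ j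
        have h2 : S3.Sc σ j = (j : ℕ) - S3.Lc σ j := by omega
        simp only [h2]
    _ = ∏ j : Fin n, ∑ l ∈ range ((j : ℕ) + 1),
          (fun (a l : ℕ) => x ^ l + x ^ (l + 2 * (a - l))) (j : ℕ) l :=
        S3.lehmer n (fun a l => x ^ l + x ^ (l + 2 * (a - l)))
    _ = ∏ j : Fin n, ((∑ l ∈ range ((j : ℕ) + 1), x ^ l) * (1 + x ^ (j : ℕ))) :=
        Finset.prod_congr rfl fun j _ => S3.factor x (j : ℕ)
    _ = ∏ j ∈ range n, ((∑ l ∈ range (j + 1), x ^ l) * (1 + x ^ j)) :=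
        Fin.prod_univ_eq_prod_range (fun j => (∑ l ∈ range (j + 1), x ^ l) * (1 + x ^ j)) n
    _ = 2 * (∑ i ∈ Finset.range n, x ^ i) *
          ∏ i ∈ Finset.Icc 1 (n - 1), ∑ j ∈ Finset.range (2 * i), x ^ j := S3.alg x n hn
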